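/- Let X ⊆ 2^ω. If the Raisonnier filter F_X is rapid, then for every partitioning real d there exists a d-binary slalom B such that X goes through B. -/

import Mathlib

open Filter Set

/-- The splitting point of two distinct elements of Cantor space. -/
noncomputable def splitPt (x y : ℕ → Bool) : ℕ := sInf {n | x n ≠ y n}

/-- The set of splitting points of a set `X ⊆ 2^ω`. -/
def splitPts (X : Set (ℕ → Bool)) : Set ℕ :=
  {k | ∃ x ∈ X, ∃ y ∈ X, x ≠ y ∧ splitPt x y = k}

/-- The Raisonnier filter of `X ⊆ 2^ω`: all `a ⊆ ℕ` such that there is a countable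
family `(Y n)` covering `X` with `⋃ n, H(Y n) ⊆ a`. -/
def raisonnier (X : Set (ℕ → Bool)) : Set (Set ℕ) :=
  {a | ∃ Y : ℕ → Set (ℕ → Bool), X ⊆ (⋃ n, Y n) ∧ (⋃ n, splitPts (Y n)) ⊆ a}

/-- A family `F` of subsets of ℕ is rapid if for every strictly increasing `f : ℕ → ℕ`
there is `a ∈ F` with `|a ∩ [0, f n)| ≤ n` for all `n`. (The trivial filter `𝒫(ℕ)`
trivially satisfies this.) -/
def IsRapid (F : Set (Set ℕ)) : Prop :=
  ∀ f : ℕ → ℕ, StrictMono f → ∃ a ∈ F, ∀ n, (a ∩ Set.Iio (f n)).ncard ≤ n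

/-- `d` is a partitioning real: strictly increasing with `d 0 = 0`.
The associated intervals are `I^d_n = [d n, d (n+1))`. -/
def IsPartitioning (d : ℕ → ℕ) : Prop := StrictMono d ∧ d 0 = 0

/-- The restriction of `x ∈ 2^ω` to the interval `I^d_n = [d n, d (n+1))`,
as a binary string of length `|I^d_n|`. -/
def restrictI (d : ℕ → ℕ) (x : ℕ → Bool) (n : ℕ) : List Bool :=
  (List.range (d (n + 1) - d n)).map fun i => x (d n + i)

/-- `B` is a `d`-binary slalom: `|B n| ≤ n` and `B n ⊆ {0,1}^{|I^d_n|}` for all `n`. -/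
def IsBinarySlalom (d : ℕ → ℕ) (B : ℕ → Finset (List Bool)) : Prop :=
  (∀ n, (B n).card ≤ n) ∧ ∀ n, ∀ s ∈ B n, s.length = d (n + 1) - d n

/-- `X ⊆ 2^ω` goes through the `d`-binary slalom `B`: every `x ∈ X` satisfies
`x ↾ I^d_n ∈ B n` for all but finitely many `n`. -/
def GoesThroughBin (d : ℕ → ℕ) (X : Set (ℕ → Bool)) (B : ℕ → Finset (List Bool)) : Prop :=
  ∀ x ∈ X, ∀ᶠ n in atTop, restrictI d x n ∈ B n

/-- prefix of length m -/
def pfx (m : ℕ) (x : ℕ → Bool) : List Bool := (List.range m).map x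

lemma pfx_finite (Y : Set (ℕ → Bool)) (m : ℕ) : (pfx m '' Y).Finite := by
  apply (List.finite_length_eq Bool m).subset
  rintro _ ⟨x, -, rfl⟩
  simp [pfx]

lemma pfx_eq_iff {m : ℕ} {x y : ℕ → Bool} : pfx m x = pfx m y ↔ ∀ k < m, x k = y k := by
  simp [pfx, List.map_eq_map_iff]

lemma splitPt_eq {x y : ℕ → Bool} {m : ℕ} (hagree : ∀ k < m, x k = y k)
    (hm : x m ≠ y m) : splitPt x y = m := by
  apply le_antisymm
  · exact Nat.sInf_le hm
  · apply le_csInf ⟨m, hm⟩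
    intro b hb
    by_contra hlt
    exact hb (hagree b (by omega))

lemma pfx_succ (m : ℕ) (x : ℕ → Bool) : pfx (m + 1) x = pfx m x ++ [x m] := by
  simp [pfx, List.range_succ]

lemma pfx_card (Y : Set (ℕ → Bool)) :
    ∀ m, (pfx m '' Y).ncard ≤ 2 ^ ((splitPts Y ∩ Set.Iio m).ncard) := by
  intro m
  induction m with
  | zero =>
    have : pfx 0 '' Y ⊆ {([] : List Bool)} := by
      rintro _ ⟨x, -, rfl⟩; simp [pfx]
    calc (pfx 0 '' Y).ncard ≤ ({([] : List Bool)} : Set (List Bool)).ncard :=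
          Set.ncard_le_ncard this (Set.finite_singleton _)
      _ ≤ 2 ^ ((splitPts Y ∩ Set.Iio 0).ncard) := by simpa using Nat.one_le_two_pow
  | succ m ih =>
    by_cases hm : m ∈ splitPts Y
    · -- split set gains m
      have hset : splitPts Y ∩ Set.Iio (m + 1) = insert m (splitPts Y ∩ Set.Iio m) := by
        ext k; simp only [Set.mem_inter_iff, Set.mem_Iio, Set.mem_insert_iff]
        constructor
        · rintro ⟨hk, hlt⟩
          rcases eq_or_lt_of_le (Nat.lt_succ_iff.mp hlt) with h | h
          · exact Or.inl h
          · exact Or.inr ⟨hk, h⟩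
        · rintro (rfl | ⟨hk, hlt⟩)
          · exact ⟨hm, Nat.lt_succ_self _⟩
          · exact ⟨hk, hlt.trans (Nat.lt_succ_self _)⟩
      have hfin : (splitPts Y ∩ Set.Iio m).Finite :=
        (Set.finite_Iio m).inter_of_right _
      have hcard : (splitPts Y ∩ Set.Iio (m + 1)).ncard
          = (splitPts Y ∩ Set.Iio m).ncard + 1 := by
        rw [hset, Set.ncard_insert_of_notMem (by simp) hfin]
      have hsub : pfx (m + 1) '' Y ⊆
          ((· ++ [true]) '' (pfx m '' Y)) ∪ ((· ++ [false]) '' (pfx m '' Y)) := by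
        rintro _ ⟨x, hx, rfl⟩
        rw [pfx_succ]
        cases hxb : x m
        · exact Or.inr ⟨pfx m x, ⟨x, hx, rfl⟩, rfl⟩
        · exact Or.inl ⟨pfx m x, ⟨x, hx, rfl⟩, rfl⟩
      have hfin1 : ((· ++ [true]) '' (pfx m '' Y)).Finite := (pfx_finite Y m).image _
      have hfin2 : ((· ++ [false]) '' (pfx m '' Y)).Finite := (pfx_finite Y m).image _
      calc (pfx (m + 1) '' Y).ncard
          ≤ (((· ++ [true]) '' (pfx m '' Y)) ∪ ((· ++ [false]) '' (pfx m '' Y))).ncard :=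
            Set.ncard_le_ncard hsub (hfin1.union hfin2)
        _ ≤ ((· ++ [true]) '' (pfx m '' Y)).ncard + ((· ++ [false]) '' (pfx m '' Y)).ncard :=
            Set.ncard_union_le _ _
        _ ≤ (pfx m '' Y).ncard + (pfx m '' Y).ncard :=
            Nat.add_le_add (Set.ncard_image_le (pfx_finite Y m))
              (Set.ncard_image_le (pfx_finite Y m))
        _ ≤ 2 ^ ((splitPts Y ∩ Set.Iio m).ncard) + 2 ^ ((splitPts Y ∩ Set.Iio m).ncard) :=
            Nat.add_le_add ih ih
        _ = 2 ^ ((splitPts Y ∩ Set.Iio (m + 1)).ncard) := by rw [hcard]; ring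
    · -- no splitting at m
      have hset : splitPts Y ∩ Set.Iio (m + 1) = splitPts Y ∩ Set.Iio m := by
        ext k; simp only [Set.mem_inter_iff, Set.mem_Iio]
        constructor
        · rintro ⟨hk, hlt⟩
          rcases eq_or_lt_of_le (Nat.lt_succ_iff.mp hlt) with h | h
          · exact absurd (h ▸ hk) hm
          · exact ⟨hk, h⟩
        · rintro ⟨hk, hlt⟩; exact ⟨hk, hlt.trans (Nat.lt_succ_self _)⟩
      classical
      set β : List Bool → Bool := fun l =>
        if (∃ x ∈ Y, pfx m x = l ∧ x m = true) then true else false with hβ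
      have hbit : ∀ x ∈ Y, x m = β (pfx m x) := by
        intro x hx
        cases hxb : x m
        · rw [hβ]; simp only
          rw [if_neg]
          rintro ⟨y, hy, hpy, hym⟩
          have hne : x ≠ y := fun he => by rw [he] at hxb; rw [hxb] at hym; exact Bool.noConfusion hym
          have : splitPt x y = m := splitPt_eq (fun k hk => (pfx_eq_iff.mp hpy k hk).symm)
            (by rw [hxb, hym]; exact Bool.noConfusion)
          exact hm ⟨x, hx, y, hy, hne, this⟩
        · rw [hβ]; simp only
          rw [if_pos ⟨x, hx, rfl, hxb⟩]
      have hsub : pfx (m + 1) '' Y ⊆ (fun l => l ++ [β l]) '' (pfx m '' Y) := by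
        rintro _ ⟨x, hx, rfl⟩
        exact ⟨pfx m x, ⟨x, hx, rfl⟩, by rw [pfx_succ, hbit x hx]⟩
      calc (pfx (m + 1) '' Y).ncard
          ≤ ((fun l => l ++ [β l]) '' (pfx m '' Y)).ncard :=
            Set.ncard_le_ncard hsub ((pfx_finite Y m).image _)
        _ ≤ (pfx m '' Y).ncard := Set.ncard_image_le (pfx_finite Y m)
        _ ≤ 2 ^ ((splitPts Y ∩ Set.Iio (m + 1)).ncard) := by rw [hset]; exact ih

lemma restrictI_eq (d : ℕ → ℕ) (x : ℕ → Bool) (n : ℕ) :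
    restrictI d x n =
      (List.range (d (n + 1) - d n)).map (fun i => (pfx (d (n + 1)) x).getD (d n + i) false) := by
  unfold restrictI
  rw [List.map_eq_map_iff]
  intro i hi
  rw [List.mem_range] at hi
  have hlt : d n + i < d (n + 1) := by omega
  rw [List.getD_eq_getElem _ _ (by simpa [pfx])]
  simp [pfx]

lemma restrict_card (d : ℕ → ℕ) (Y : Set (ℕ → Bool)) (n : ℕ) :
    ((fun x => restrictI d x n) '' Y).ncard ≤ (pfx (d (n + 1)) '' Y).ncard := by
  have : (fun x => restrictI d x n) '' Y =
      (fun l => (List.range (d (n + 1) - d n)).map (fun i => l.getD (d n + i) false)) ''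
        (pfx (d (n + 1)) '' Y) := by
    rw [← Set.image_comp]
    exact Set.image_congr fun x _ => restrictI_eq d x n
  rw [this]
  exact Set.ncard_image_le (pfx_finite Y _)

lemma restrict_finite (d : ℕ → ℕ) (Y : Set (ℕ → Bool)) (n : ℕ) :
    ((fun x => restrictI d x n) '' Y).Finite := by
  apply (List.finite_length_eq Bool (d (n + 1) - d n)).subset
  rintro _ ⟨x, -, rfl⟩
  simp [restrictI]

lemma growth (d : ℕ → ℕ) (hd : StrictMono d) (a : Set ℕ)
    (ha : ∀ m, (a ∩ Set.Iio (d (2 ^ (m * m)))).ncard ≤ m) (C : ℕ) :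
    ∃ N, ∀ n ≥ N, C * 2 ^ ((a ∩ Set.Iio (d (n + 1))).ncard) ≤ n := by
  refine ⟨2 ^ ((C + 2) * (C + 2)), fun n hn => ?_⟩
  have hex : ∃ m, n + 1 ≤ 2 ^ (m * m) := by
    refine ⟨n + 1, ?_⟩
    calc n + 1 ≤ 2 ^ (n + 1) := Nat.succ_le_of_lt (Nat.lt_of_lt_of_le (Nat.lt_two_pow_self (n := _)) (Nat.pow_le_pow_right (by norm_num) (Nat.le_succ _)))
      _ ≤ 2 ^ ((n + 1) * (n + 1)) := Nat.pow_le_pow_right (by norm_num) (Nat.le_mul_of_pos_left _ (by omega))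
  set m := Nat.find hex with hm
  have h1 : n + 1 ≤ 2 ^ (m * m) := Nat.find_spec hex
  have hm0 : C + 3 ≤ m := by
    by_contra hc
    push_neg at hc
    have : 2 ^ (m * m) ≤ 2 ^ ((C + 2) * (C + 2)) :=
      Nat.pow_le_pow_right (by norm_num) (Nat.mul_le_mul (by omega) (by omega))
    omega
  have h2 : 2 ^ ((m - 1) * (m - 1)) ≤ n := by
    have := Nat.find_min hex (m := m - 1) (by omega)
    omega
  -- c n ≤ m
  have hc : (a ∩ Set.Iio (d (n + 1))).ncard ≤ m := by
    refine le_trans (Set.ncard_le_ncard ?_ ((Set.finite_Iio _).inter_of_right _)) (ha m)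
    exact Set.inter_subset_inter_right _ (Set.Iio_subset_Iio (hd.monotone h1))
  calc C * 2 ^ ((a ∩ Set.Iio (d (n + 1))).ncard)
      ≤ 2 ^ C * 2 ^ m := Nat.mul_le_mul (Nat.le_of_lt (Nat.lt_two_pow_self (n := C)))
        (Nat.pow_le_pow_right (by norm_num) hc)
    _ = 2 ^ (C + m) := by rw [← pow_add]
    _ ≤ 2 ^ ((m - 1) * (m - 1)) := by
        apply Nat.pow_le_pow_right (by norm_num)
        have h3 : 2 ≤ m - 1 := by omega
        calc C + m ≤ (m - 1) + (m - 1) := by omega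
          _ = 2 * (m - 1) := by ring
          _ ≤ (m - 1) * (m - 1) := Nat.mul_le_mul_right _ h3
    _ ≤ n := h2

theorem stmt13 (X : Set (ℕ → Bool)) (h : IsRapid (raisonnier X)) :
    ∀ d : ℕ → ℕ, IsPartitioning d →
      ∃ B : ℕ → Finset (List Bool), IsBinarySlalom d B ∧ GoesThroughBin d X B := by
  intro d hd
  classical
  -- apply rapidity to f m = d (2 ^ (m * m))
  have hf : StrictMono (fun m => d (2 ^ (m * m))) := by
    apply hd.1.comp
    intro i j hij
    exact Nat.pow_lt_pow_right (by norm_num) (Nat.mul_lt_mul_of_lt_of_le hij hij.le (by omega))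
  obtain ⟨a, ⟨Y, hcov, hsp⟩, ha⟩ := h _ hf
  -- the count function
  set c : ℕ → ℕ := fun n => (a ∩ Set.Iio (d (n + 1))).ncard with hc
  -- each Y i contributes at most 2 ^ c n restrictions
  have hR : ∀ i n, ((fun x => restrictI d x n) '' (Y i)).ncard ≤ 2 ^ c n := by
    intro i n
    refine le_trans (restrict_card d (Y i) n) (le_trans (pfx_card (Y i) (d (n + 1))) ?_)
    apply Nat.pow_le_pow_right (by norm_num)
    apply Set.ncard_le_ncard _ ((Set.finite_Iio _).inter_of_right _)
    apply Set.inter_subset_inter_left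
    exact fun k hk => hsp (Set.mem_iUnion.mpr ⟨i, hk⟩)
  -- define the slalom
  set B : ℕ → Finset (List Bool) := fun n =>
    (Finset.range (n / 2 ^ c n)).biUnion
      (fun i => (restrict_finite d (Y i) n).toFinset) with hB
  refine ⟨B, ⟨?_, ?_⟩, ?_⟩
  · -- cardinality bound
    intro n
    calc (B n).card ≤ ∑ i ∈ Finset.range (n / 2 ^ c n),
          ((restrict_finite d (Y i) n).toFinset).card := Finset.card_biUnion_le
      _ ≤ ∑ _i ∈ Finset.range (n / 2 ^ c n), 2 ^ c n := by
          apply Finset.sum_le_sum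
          intro i _
          rw [← Set.ncard_eq_toFinset_card _ (restrict_finite d (Y i) n)]
          exact hR i n
      _ = (n / 2 ^ c n) * 2 ^ c n := by simp [Finset.sum_const, mul_comm]
      _ ≤ n := Nat.div_mul_le_self n _
  · -- length condition
    intro n s hs
    rw [hB] at hs
    simp only [Finset.mem_biUnion, Set.Finite.mem_toFinset] at hs
    obtain ⟨i, -, x, -, rfl⟩ := hs
    simp [restrictI]
  · -- goes through
    intro x hx
    obtain ⟨i, hi⟩ := Set.mem_iUnion.mp (hcov hx)
    obtain ⟨N, hN⟩ := growth d hd.1 a ha (i + 1)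
    rw [Filter.eventually_atTop]
    refine ⟨N, fun n hn => ?_⟩
    have hdiv : i < n / 2 ^ c n := by
      have h2 : 0 < 2 ^ c n := Nat.pow_pos (by norm_num)
      have := hN n hn
      exact Nat.lt_of_succ_le ((Nat.le_div_iff_mul_le h2).mpr this)
    rw [hB]
    simp only [Finset.mem_biUnion, Set.Finite.mem_toFinset]
    exact ⟨i, Finset.mem_range.mpr hdiv, x, hi, rfl⟩
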